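/- Let f : [0,1) → [0,1) be a piecewise increasing contraction whose set of periodic points is nonempty. Define an equivalence relation on the singular set S by x ~ y iff ω(f,x) = ω(f,y), and let A(f) = S/~. Then there exists a map ψ : Per(f) → A(f) such that ψ(x) = ψ(y) if and only if x and y lie on the same periodic orbit. In particular, the number of distinct periodic orbits of f is at most the cardinality of A(f). -/

import Mathlib

/-- The ω-limit set of `x` under iteration of `f`: the cluster points of the orbit. -/
def omegaSet (f : ℝ → ℝ) (x : ℝ) : Set ℝ :=
  {y | MapClusterPt y Filter.atTop fun n => f^[n] x}

open Set Filter Function Topology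


/-- iterate mod periodicity -/
lemma stmt4_iterate_mod (f : ℝ → ℝ) {y : ℝ} {p : ℕ} (hp : 1 ≤ p) (hy : f^[p] y = y) :
    ∀ m, f^[m] y = f^[m % p] y := by
  intro m
  induction m using Nat.strong_induction_on with
  | _ m ih =>
    by_cases h : m < p
    · rw [Nat.mod_eq_of_lt h]
    · push_neg at h
      have h1 : m - p + p = m := Nat.sub_add_cancel h
      have h2 : f^[m] y = f^[m - p] y := by
        conv_lhs => rw [← h1]
        rw [Function.iterate_add_apply, hy]
      rw [h2, ih (m - p) (by omega)]
      congr 1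
      conv_rhs => rw [← h1]
      rw [Nat.add_mod_right]

lemma stmt4_range_orbit (f : ℝ → ℝ) {y : ℝ} {p : ℕ} (hp : 1 ≤ p) (hy : f^[p] y = y) :
    Set.range (fun m => f^[m] y) = (fun r => f^[r] y) '' Set.Iio p := by
  apply subset_antisymm
  · rintro _ ⟨m, rfl⟩
    exact ⟨m % p, Nat.mod_lt _ (by omega), (stmt4_iterate_mod f hp hy m).symm⟩
  · rintro _ ⟨r, _, rfl⟩
    exact ⟨r, rfl⟩

lemma stmt4_periodic_omega (f : ℝ → ℝ) {y : ℝ} {p : ℕ} (hp : 1 ≤ p) (hy : f^[p] y = y) :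
    omegaSet f y = Set.range fun m => f^[m] y := by
  have hO := stmt4_range_orbit f hp hy
  apply subset_antisymm
  · intro z hz
    by_contra hzO
    have hfin : ((fun r => f^[r] y) '' Set.Iio p).Finite := (Set.finite_Iio p).image _
    have hmem : ((fun r => f^[r] y) '' Set.Iio p)ᶜ ∈ 𝓝 z := by
      refine hfin.isClosed.isOpen_compl.mem_nhds ?_
      rw [hO] at hzO; exact hzO
    obtain ⟨n, hn⟩ := ((mapClusterPt_iff_frequently.mp hz) _ hmem).exists
    exact hn ⟨n % p, Nat.mod_lt _ (by omega), (stmt4_iterate_mod f hp hy n).symm⟩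
  · rintro _ ⟨m, rfl⟩
    rw [omegaSet, Set.mem_setOf_eq, mapClusterPt_iff_frequently]
    intro U hU
    rw [frequently_atTop]
    intro N
    refine ⟨m + N * p, ?_, ?_⟩
    · have : N ≤ N * p := Nat.le_mul_of_pos_right N (by omega)
      omega
    · have : f^[m + N * p] y = f^[m] y := by
        rw [stmt4_iterate_mod f hp hy (m + N * p), Nat.add_mul_mod_self_right,
          ← stmt4_iterate_mod f hp hy m]
      rw [this]
      exact mem_of_mem_nhds hU

section Fin
variable {f : ℝ → ℝ} {S : Set ℝ} {lam : ℝ}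

lemma stmt4_fiber_finite (hSfin : S.Finite) (hS0 : (0:ℝ) ∈ S)
    (hpiece : ∀ x ∈ Set.Ico (0:ℝ) 1, ∀ y ∈ Set.Ico (0:ℝ) 1, x < y →
      (∀ s ∈ S, s ∉ Set.Ioc x y) → f x < f y ∧ f y - f x ≤ lam * (y - x))
    (b : ℝ) : {w : ℝ | w ∈ Set.Ico (0:ℝ) 1 ∧ f w = b}.Finite := by
  classical
  set g : ℝ → ℝ := fun w => sSup (S ∩ Set.Iic w) with hg
  have hgmem : ∀ w ∈ Set.Ico (0:ℝ) 1, g w ∈ S ∩ Set.Iic w := fun w hw =>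
    Set.Nonempty.csSup_mem ⟨0, hS0, hw.1⟩ (hSfin.inter_of_left _)
  have hkey : ∀ u v : ℝ, (u ∈ Set.Ico (0:ℝ) 1 ∧ f u = b) → (v ∈ Set.Ico (0:ℝ) 1 ∧ f v = b) →
      u < v → g u < g v := by
    intro u v hu hv huv
    have hnot : ¬ (∀ s ∈ S, s ∉ Set.Ioc u v) := by
      intro hcon
      have := (hpiece u hu.1 v hv.1 huv hcon).1
      rw [hu.2, hv.2] at this
      exact lt_irrefl _ this
    push_neg at hnot
    obtain ⟨s, hsS, hsIoc⟩ := hnot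
    have h1 : g u ≤ u := (hgmem u hu.1).2
    have h2 : s ≤ g v := le_csSup (hSfin.inter_of_left _).bddAbove ⟨hsS, hsIoc.2⟩
    calc g u ≤ u := h1
      _ < s := hsIoc.1
      _ ≤ g v := h2
  apply Set.Finite.of_finite_image (f := g)
  · exact hSfin.subset (by rintro _ ⟨w, hw, rfl⟩; exact (hgmem w hw.1).1)
  · intro u hu v hv heq
    by_contra hne
    rcases lt_or_gt_of_ne hne with h | h
    · exact absurd heq (ne_of_lt (hkey u v hu hv h))
    · exact absurd heq.symm (ne_of_lt (hkey v u hv hu h))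

lemma stmt4_preimage_finite (hSfin : S.Finite) (hS0 : (0:ℝ) ∈ S)
    (hpiece : ∀ x ∈ Set.Ico (0:ℝ) 1, ∀ y ∈ Set.Ico (0:ℝ) 1, x < y →
      (∀ s ∈ S, s ∉ Set.Ioc x y) → f x < f y ∧ f y - f x ≤ lam * (y - x))
    {B : Set ℝ} (hB : B.Finite) : {w : ℝ | w ∈ Set.Ico (0:ℝ) 1 ∧ f w ∈ B}.Finite := by
  have : {w : ℝ | w ∈ Set.Ico (0:ℝ) 1 ∧ f w ∈ B} =
      ⋃ b ∈ B, {w : ℝ | w ∈ Set.Ico (0:ℝ) 1 ∧ f w = b} := by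
    ext w; simp only [Set.mem_setOf_eq, Set.mem_iUnion]
    constructor
    · rintro ⟨h1, h2⟩; exact ⟨f w, h2, h1, rfl⟩
    · rintro ⟨b, hb, h1, rfl⟩; exact ⟨h1, hb⟩
  rw [this]
  exact hB.biUnion fun b _ => stmt4_fiber_finite hSfin hS0 hpiece b

lemma stmt4_T_finite (hSfin : S.Finite) (hS0 : (0:ℝ) ∈ S)
    (hmap : Set.MapsTo f (Set.Ico 0 1) (Set.Ico 0 1))
    (hpiece : ∀ x ∈ Set.Ico (0:ℝ) 1, ∀ y ∈ Set.Ico (0:ℝ) 1, x < y →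
      (∀ s ∈ S, s ∉ Set.Ioc x y) → f x < f y ∧ f y - f x ≤ lam * (y - x))
    (p : ℕ) : {w : ℝ | w ∈ Set.Ico (0:ℝ) 1 ∧ ∃ j < p, f^[j] w ∈ S}.Finite := by
  have hTj : ∀ j : ℕ, {w : ℝ | w ∈ Set.Ico (0:ℝ) 1 ∧ f^[j] w ∈ S}.Finite := by
    intro j
    induction j with
    | zero => exact hSfin.subset (fun w hw => by simpa using hw.2)
    | succ j ih =>
      refine (stmt4_preimage_finite hSfin hS0 hpiece ih).subset ?_
      rintro w ⟨hw, hwS⟩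
      exact ⟨hw, hmap hw, by rwa [← Function.iterate_succ_apply]⟩
  refine ((Set.finite_Iio p).biUnion fun j _ => hTj j).subset ?_
  rintro w ⟨hw, j, hj, hjS⟩
  exact Set.mem_biUnion hj ⟨hw, hjS⟩

end Fin

lemma stmt4_key {f : ℝ → ℝ} {S : Set ℝ} {lam : ℝ}
    (hlam0 : 0 < lam) (hlam1 : lam < 1)
    (hSfin : S.Finite) (hS0 : (0:ℝ) ∈ S) (hSsub : S ⊆ Set.Ico 0 1)
    (hmap : Set.MapsTo f (Set.Ico 0 1) (Set.Ico 0 1))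
    (hrc : ∀ x ∈ Set.Ico (0:ℝ) 1, ContinuousWithinAt f (Set.Ici x) x)
    (hpiece : ∀ x ∈ Set.Ico (0:ℝ) 1, ∀ y ∈ Set.Ico (0:ℝ) 1, x < y →
      (∀ s ∈ S, s ∉ Set.Ioc x y) → f x < f y ∧ f y - f x ≤ lam * (y - x))
    {x : ℝ} (hx : x ∈ Set.Ico (0:ℝ) 1) {p : ℕ} (hp : 1 ≤ p) (hxp : f^[p] x = x) :
    ∃ s ∈ S, omegaSet f s = Set.range fun m => f^[m] x := by
  classical
  have hit : ∀ (i : ℕ) (w : ℝ), w ∈ Set.Ico (0:ℝ) 1 → f^[i] w ∈ Set.Ico (0:ℝ) 1 :=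
    fun i w hw => hmap.iterate i hw
  set T : Set ℝ := {w : ℝ | w ∈ Set.Ico (0:ℝ) 1 ∧ ∃ j < p, f^[j] w ∈ S} with hT
  have hTfin : T.Finite := stmt4_T_finite hSfin hS0 hmap hpiece p
  have hT'ne : (T ∩ Set.Iic x).Nonempty := by
    refine ⟨0, ⟨⟨le_rfl, one_pos⟩, 0, by omega, by simpa using hS0⟩, hx.1⟩
  set a : ℝ := sSup (T ∩ Set.Iic x) with ha
  have haT' : a ∈ T ∩ Set.Iic x :=
    Set.Nonempty.csSup_mem hT'ne (hTfin.inter_of_left _)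
  have hamax : ∀ w ∈ T, w ≤ x → w ≤ a := fun w hw hwx =>
    le_csSup (hTfin.inter_of_left _).bddAbove ⟨hw, hwx⟩
  have ha0 : (0:ℝ) ≤ a := haT'.1.1.1
  have hax : a ≤ x := haT'.2
  have ha1 : a < 1 := haT'.1.1.2
  obtain ⟨j, hj, hjS⟩ := haT'.1.2
  rcases eq_or_lt_of_le hax with haxeq | haxlt
  · -- a = x : the orbit of x itself meets S
    rw [haxeq] at hjS
    refine ⟨f^[j] x, hjS, ?_⟩
    have hsper : f^[p] (f^[j] x) = f^[j] x := by
      calc f^[p] (f^[j] x) = f^[p + j] x := (Function.iterate_add_apply f p j x).symm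
        _ = f^[j] (f^[p] x) := by rw [Nat.add_comm, Function.iterate_add_apply]
        _ = f^[j] x := by rw [hxp]
    rw [stmt4_periodic_omega f hp hsper]
    apply subset_antisymm
    · rintro _ ⟨m, rfl⟩
      exact ⟨m + j, Function.iterate_add_apply f m j x⟩
    · rintro _ ⟨m, rfl⟩
      refine ⟨m + (p - j), ?_⟩
      show f^[m + (p-j)] (f^[j] x) = f^[m] x
      rw [← Function.iterate_add_apply]
      have : m + (p - j) + j = m + p := by omega
      rw [this, Function.iterate_add_apply, hxp]
  · -- a < x
    have hmemIcc : ∀ y : ℝ, y ∈ Set.Icc a x → y ∈ Set.Ico (0:ℝ) 1 :=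
      fun y hy => ⟨ha0.trans hy.1, lt_of_le_of_lt hy.2 hx.2⟩
    have H : ∀ i, i ≤ p →
        (∀ y z : ℝ, y ∈ Set.Icc a x → z ∈ Set.Icc a x → y ≤ z →
          f^[i] y ≤ f^[i] z ∧ f^[i] z - f^[i] y ≤ lam ^ i * (z - y)) ∧
        Filter.Tendsto f^[i] (nhdsWithin a (Set.Ioi a)) (nhds (f^[i] a)) := by
      intro i
      induction i with
      | zero =>
        intro _
        constructor
        · intro y z hy hz hyz
          simp only [Function.iterate_zero, id_eq, pow_zero, one_mul]
          exact ⟨hyz, le_rfl⟩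
        · simp only [Function.iterate_zero, id_eq]
          exact tendsto_id.mono_left nhdsWithin_le_nhds
      | succ i ih =>
        intro hip
        obtain ⟨hD, hR⟩ := ih (by omega)
        have hilt : i < p := by omega
        have hpow1 : lam ^ i ≤ 1 := pow_le_one₀ hlam0.le hlam1.le
        have hcont : ContinuousOn (f^[i]) (Set.Icc a x) := by
          rw [Metric.continuousOn_iff]
          intro b hb ε hε
          refine ⟨ε, hε, fun w hw hwb => ?_⟩
          have habs : |f^[i] w - f^[i] b| ≤ |w - b| := by
            rcases le_total w b with h | h
            · have hd := hD w b hw hb h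
              rw [abs_of_nonpos (by linarith [hd.1]), abs_of_nonpos (by linarith)]
              nlinarith [hd.2, pow_nonneg hlam0.le i]
            · have hd := hD b w hb hw h
              rw [abs_of_nonneg (by linarith [hd.1]), abs_of_nonneg (by linarith)]
              nlinarith [hd.2, pow_nonneg hlam0.le i]
          rw [Real.dist_eq] at hwb ⊢
          exact lt_of_le_of_lt habs hwb
        have hM : ∀ y z : ℝ, y ∈ Set.Icc a x → z ∈ Set.Icc a x → y ≤ z →
            ∀ s' ∈ S, s' ∉ Set.Ioc (f^[i] y) (f^[i] z) := by
          intro y z hy hz hyz s' hs' hIoc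
          obtain ⟨hlt1, hle2⟩ := hIoc
          have hfyz : f^[i] y < f^[i] z := lt_of_lt_of_le hlt1 hle2
          have hyzlt : y < z := by
            rcases eq_or_lt_of_le hyz with rfl | h
            · exact absurd hfyz (lt_irrefl _)
            · exact h
          have hw0 : ∃ w₀ : ℝ, a < w₀ ∧ w₀ ≤ z ∧ f^[i] w₀ < s' := by
            rcases eq_or_lt_of_le hy.1 with hya | hya
            · by_contra hcon
              push_neg at hcon
              have haz : a < z := by rw [hya]; exact hyzlt
              have hev1 : ∀ᶠ w in nhdsWithin a (Set.Ioi a), w ∈ Set.Ioc a z :=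
                Ioc_mem_nhdsGT haz
              have hfa : f^[i] a < s' := by rw [hya]; exact hlt1
              have hev2 : ∀ᶠ w in nhdsWithin a (Set.Ioi a), f^[i] w < s' :=
                hR (Iio_mem_nhds hfa)
              obtain ⟨w, hw1, hw2⟩ := (hev1.and hev2).exists
              exact absurd (hcon w hw1.1 hw1.2) (not_le.mpr hw2)
            · exact ⟨y, hya, hyz, hlt1⟩
          obtain ⟨w₀, hw₀a, hw₀z, hw₀s⟩ := hw0
          have hVsub : Set.Icc w₀ z ⊆ Set.Icc a x :=
            fun w hw => ⟨hw₀a.le.trans hw.1, hw.2.trans hz.2⟩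
          have hVcl : IsClosed (Set.Icc w₀ z ∩ f^[i] ⁻¹' Set.Ici s') :=
            (hcont.mono hVsub).preimage_isClosed_of_isClosed isClosed_Icc isClosed_Ici
          have hVne : (Set.Icc w₀ z ∩ f^[i] ⁻¹' Set.Ici s').Nonempty :=
            ⟨z, ⟨hw₀z, le_rfl⟩, hle2⟩
          have hVbdd : BddBelow (Set.Icc w₀ z ∩ f^[i] ⁻¹' Set.Ici s') :=
            ⟨w₀, fun w hw => hw.1.1⟩
          have huV : sInf (Set.Icc w₀ z ∩ f^[i] ⁻¹' Set.Ici s') ∈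
              Set.Icc w₀ z ∩ f^[i] ⁻¹' Set.Ici s' := hVcl.csInf_mem hVne hVbdd
          set u := sInf (Set.Icc w₀ z ∩ f^[i] ⁻¹' Set.Ici s') with hu
          obtain ⟨⟨hw₀u, huz⟩, hus'⟩ := huV
          have hus'' : s' ≤ f^[i] u := hus'
          have hw₀u' : w₀ < u := by
            rcases eq_or_lt_of_le hw₀u with heq | h
            · rw [← heq] at hus''; linarith
            · exact h
          have hueq : f^[i] u = s' := by
            by_contra hne
            have hgt : s' < f^[i] u := lt_of_le_of_ne hus'' (Ne.symm hne)
            have hδpos : 0 < (f^[i] u - s') / 2 := by linarith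
            set w := max w₀ (u - (f^[i] u - s') / 2) with hwdef
            have hwu : w < u := max_lt hw₀u' (by linarith)
            have hwIcc : w ∈ Set.Icc w₀ z := ⟨le_max_left _ _, hwu.le.trans huz⟩
            have hwd := hD w u (hVsub hwIcc) (hVsub ⟨hw₀u, huz⟩) hwu.le
            have h2 : u - w ≤ (f^[i] u - s') / 2 := by
              have := le_max_right w₀ (u - (f^[i] u - s') / 2); linarith
            have h3 : lam ^ i * (u - w) ≤ u - w := by
              nlinarith [pow_nonneg hlam0.le i]
            have hwge : s' ≤ f^[i] w := by linarith [hwd.2]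
            have : u ≤ w := csInf_le hVbdd ⟨hwIcc, hwge⟩
            linarith
          have huT : sInf (Set.Icc w₀ z ∩ f^[i] ⁻¹' Set.Ici s') ∈ T := by
            rw [← hu]
            exact ⟨hmemIcc u (hVsub ⟨hw₀u, huz⟩), i, hilt, by rw [hueq]; exact hs'⟩
          have := hamax _ huT (by rw [← hu]; exact huz.trans hz.2)
          rw [← hu] at this
          linarith
        refine ⟨?_, ?_⟩
        · intro y z hy hz hyz
          have hD1 := hD y z hy hz hyz
          rcases eq_or_lt_of_le hD1.1 with heq | hlt
          · rw [Function.iterate_succ_apply', Function.iterate_succ_apply', heq]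
            refine ⟨le_rfl, ?_⟩
            have : (0:ℝ) ≤ lam ^ (i+1) * (z - y) :=
              mul_nonneg (pow_nonneg hlam0.le _) (by linarith)
            linarith
          · have hpc := hpiece _ (hit i y (hmemIcc y hy)) _ (hit i z (hmemIcc z hz)) hlt
              (hM y z hy hz hyz)
            rw [Function.iterate_succ_apply', Function.iterate_succ_apply']
            refine ⟨hpc.1.le, ?_⟩
            calc f (f^[i] z) - f (f^[i] y) ≤ lam * (f^[i] z - f^[i] y) := hpc.2
              _ ≤ lam * (lam ^ i * (z - y)) :=
                mul_le_mul_of_nonneg_left hD1.2 hlam0.le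
              _ = lam ^ (i+1) * (z - y) := by ring
        · have hc : f^[i] a ∈ Set.Ico (0:ℝ) 1 := hit i a ⟨ha0, ha1⟩
          have hfc := hrc _ hc
          have hev : ∀ᶠ w in nhdsWithin a (Set.Ioi a), f^[i] w ∈ Set.Ici (f^[i] a) := by
            filter_upwards [Ioc_mem_nhdsGT haxlt] with w hw
            exact (hD a w ⟨le_rfl, hax⟩ ⟨hw.1.le, hw.2⟩ hw.1.le).1
          have ht : Filter.Tendsto (f^[i]) (nhdsWithin a (Set.Ioi a))
              (nhdsWithin (f^[i] a) (Set.Ici (f^[i] a))) :=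
            tendsto_nhdsWithin_of_tendsto_nhds_of_eventually_within _ hR hev
          have hcomp : Filter.Tendsto (f ∘ f^[i]) (nhdsWithin a (Set.Ioi a))
              (nhds (f (f^[i] a))) := Filter.Tendsto.comp hfc ht
          rw [Function.iterate_succ']
          exact hcomp
    have hDp : ∀ i, i ≤ p → ∀ y z : ℝ, y ∈ Set.Icc a x → z ∈ Set.Icc a x → y ≤ z →
        f^[i] y ≤ f^[i] z ∧ f^[i] z - f^[i] y ≤ lam ^ i * (z - y) :=
      fun i hi => (H i hi).1
    have hb : ∀ q : ℕ, 1 ≤ q →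
        f^[q * p] a ∈ Set.Ioc a x ∧ x - f^[q * p] a ≤ lam ^ (q * p) * (x - a) := by
      intro q hq
      induction q with
      | zero => omega
      | succ q ihq =>
        have hIa : a ∈ Set.Icc a x := ⟨le_rfl, hax⟩
        have hIx : x ∈ Set.Icc a x := ⟨hax, le_rfl⟩
        rcases Nat.eq_zero_or_pos q with rfl | hq'
        · simp only [Nat.zero_add, one_mul]
          have hd := hDp p le_rfl a x hIa hIx hax
          rw [hxp] at hd
          have hlp : lam ^ p < 1 := pow_lt_one₀ hlam0.le hlam1 (by omega)
          have h2 : lam ^ p * (x - a) < x - a := by nlinarith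
          exact ⟨⟨by linarith [hd.2], hd.1⟩, hd.2⟩
        · obtain ⟨ih1, ih2⟩ := ihq hq'
          have harith : (q + 1) * p = p + q * p := by ring
          rw [harith, Function.iterate_add_apply]
          have hbI : f^[q*p] a ∈ Set.Icc a x := ⟨ih1.1.le, ih1.2⟩
          have hd := hDp p le_rfl _ x hbI hIx ih1.2
          rw [hxp] at hd
          have hpos : (0:ℝ) ≤ lam ^ p := pow_nonneg hlam0.le p
          have key2 : x - f^[p] (f^[q*p] a) ≤ lam ^ (p + q * p) * (x - a) := by
            have h3 : lam ^ p * (x - f^[q*p] a) ≤ lam ^ p * (lam ^ (q*p) * (x - a)) :=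
              mul_le_mul_of_nonneg_left ih2 hpos
            calc x - f^[p] (f^[q*p] a) ≤ lam ^ p * (x - f^[q*p] a) := hd.2
              _ ≤ lam ^ p * (lam ^ (q*p) * (x - a)) := h3
              _ = lam ^ (p + q*p) * (x - a) := by rw [pow_add]; ring
          have hlt1 : lam ^ (p + q*p) < 1 := pow_lt_one₀ hlam0.le hlam1 (by omega)
          refine ⟨⟨?_, hd.1⟩, key2⟩
          nlinarith [key2]
    have hsmall : ∀ ε : ℝ, 0 < ε → ∃ Q₀ : ℕ, ∀ q ≥ Q₀, lam ^ (q * p) * (x - a) < ε := by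
      intro ε hε
      have h1 : Filter.Tendsto (fun k : ℕ => lam ^ k) Filter.atTop (nhds 0) :=
        tendsto_pow_atTop_nhds_zero_of_lt_one hlam0.le hlam1
      have h2 : Filter.Tendsto (fun k : ℕ => lam ^ k * (x - a)) Filter.atTop (nhds 0) := by
        simpa using h1.mul_const (x - a)
      have h3 : ∀ᶠ k in Filter.atTop, lam ^ k * (x - a) < ε :=
        h2.eventually_lt_const hε
      obtain ⟨K, hK⟩ := Filter.eventually_atTop.mp h3
      exact ⟨K, fun q hq => hK (q * p) (le_trans hq (Nat.le_mul_of_pos_right q (by omega)))⟩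
    have hclose : ∀ r, r ≤ p → ∀ b ∈ Set.Icc a x, dist (f^[r] b) (f^[r] x) ≤ x - b := by
      intro r hr b hbI
      have hd := hDp r hr b x hbI ⟨hax, le_rfl⟩ hbI.2
      have hpow : lam ^ r ≤ 1 := pow_le_one₀ hlam0.le hlam1.le
      rw [Real.dist_eq, abs_of_nonpos (by linarith [hd.1])]
      nlinarith [hd.2, hbI.2]
    have hsorb : ∀ n : ℕ, f^[n] (f^[j] a) = f^[n + j] a := fun n =>
      (Function.iterate_add_apply f n j a).symm
    refine ⟨f^[j] a, hjS, ?_⟩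
    rw [stmt4_range_orbit f hp hxp]
    apply subset_antisymm
    · intro z hz
      have hfin : ((fun r => f^[r] x) '' Set.Iio p).Finite := (Set.finite_Iio p).image _
      have hclosed : IsClosed ((fun r => f^[r] x) '' Set.Iio p) := hfin.isClosed
      have hzc : z ∈ closure ((fun r => f^[r] x) '' Set.Iio p) := by
        rw [Metric.mem_closure_iff]
        intro ε hε
        obtain ⟨Q₀, hQ₀⟩ := hsmall (ε/2) (by linarith)
        have hball : Metric.ball z (ε/2) ∈ nhds z := Metric.ball_mem_nhds z (by linarith)
        obtain ⟨n, hnge, hnz⟩ :=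
          Filter.frequently_atTop.mp ((mapClusterPt_iff_frequently.mp hz) _ hball) ((Q₀+1) * p)
        have hppos : 0 < p := by omega
        have hrp : (n + j) % p < p := Nat.mod_lt _ hppos
        have hsum : p * ((n + j) / p) + (n + j) % p = n + j := Nat.div_add_mod (n + j) p
        have hq1 : Q₀ + 1 ≤ (n + j) / p := by
          rw [Nat.le_div_iff_mul_le hppos]
          calc (Q₀ + 1) * p ≤ n := hnge
            _ ≤ n + j := Nat.le_add_right _ _
        have hq : 1 ≤ (n + j) / p := by omega
        have hfn : f^[n] (f^[j] a) = f^[(n + j) % p] (f^[((n + j) / p) * p] a) := by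
          rw [hsorb n, ← Function.iterate_add_apply]
          congr 1
          have hc : ((n + j) / p) * p = p * ((n + j) / p) := Nat.mul_comm _ _
          omega
        obtain ⟨hbIoc, hbd⟩ := hb ((n + j) / p) hq
        have hcl2 : dist (f^[n] (f^[j] a)) (f^[(n + j) % p] x) ≤
            lam ^ (((n + j) / p) * p) * (x - a) := by
          rw [hfn]
          refine le_trans (hclose _ hrp.le _ ⟨hbIoc.1.le, hbIoc.2⟩) ?_
          linarith [hbd]
        have hsm : lam ^ (((n + j) / p) * p) * (x - a) < ε/2 := hQ₀ _ (by omega)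
        refine ⟨f^[(n + j) % p] x, ⟨(n + j) % p, hrp, rfl⟩, ?_⟩
        have h1 : dist z (f^[n] (f^[j] a)) < ε/2 := by
          rw [dist_comm]; exact Metric.mem_ball.mp hnz
        calc dist z (f^[(n + j) % p] x)
            ≤ dist z (f^[n] (f^[j] a)) + dist (f^[n] (f^[j] a)) (f^[(n + j) % p] x) :=
              dist_triangle _ _ _
          _ < ε/2 + ε/2 := by linarith
          _ = ε := by ring
      rwa [hclosed.closure_eq] at hzc
    · rintro _ ⟨r, hrp, rfl⟩
      show MapClusterPt (f^[r] x) Filter.atTop fun n => f^[n] (f^[j] a)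
      rw [mapClusterPt_iff_frequently]
      intro U hU
      rw [Filter.frequently_atTop]
      intro N
      obtain ⟨ε, hε, hballU⟩ := Metric.mem_nhds_iff.mp hU
      obtain ⟨Q₀, hQ₀⟩ := hsmall ε hε
      have hQ1 : 1 ≤ max Q₀ (N + p) := by
        have := le_max_right Q₀ (N + p); omega
      have hQp : max Q₀ (N + p) ≤ (max Q₀ (N + p)) * p :=
        Nat.le_mul_of_pos_right _ (by omega)
      have hpQ : p ≤ (max Q₀ (N + p)) * p := Nat.le_mul_of_pos_left p (by omega)
      have hjQ : j ≤ (max Q₀ (N + p)) * p + r := by omega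
      have hnj : ((max Q₀ (N + p)) * p + r - j) + j = (max Q₀ (N + p)) * p + r :=
        Nat.sub_add_cancel hjQ
      have hnN : N ≤ (max Q₀ (N + p)) * p + r - j := by
        have h1 := le_max_right Q₀ (N + p)
        omega
      obtain ⟨hbIoc, hbd⟩ := hb (max Q₀ (N + p)) hQ1
      have hfn : f^[(max Q₀ (N + p)) * p + r - j] (f^[j] a) =
          f^[r] (f^[(max Q₀ (N + p)) * p] a) := by
        rw [hsorb _, ← Function.iterate_add_apply]
        congr 1
        omega
      refine ⟨(max Q₀ (N + p)) * p + r - j, hnN, ?_⟩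
      apply hballU
      rw [Metric.mem_ball, hfn]
      have hcl := hclose r hrp.le _ ⟨hbIoc.1.le, hbIoc.2⟩
      have h2 : lam ^ ((max Q₀ (N + p)) * p) * (x - a) < ε := hQ₀ _ (le_max_left _ _)
      calc dist (f^[r] (f^[(max Q₀ (N + p)) * p] a)) (f^[r] x)
          ≤ x - f^[(max Q₀ (N + p)) * p] a := hcl
        _ ≤ lam ^ ((max Q₀ (N + p)) * p) * (x - a) := hbd
        _ < ε := h2

/-- For a piecewise increasing contraction `f` with nonempty set of
periodic points, there is a map `ψ` from periodic points to the singular set `S` such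
that `ψ x` and `ψ y` lie in the same class of the relation `s ~ t ↔ ω(f,s) = ω(f,t)`
iff `x` and `y` lie on the same periodic orbit.  In particular the number of periodic
orbits is at most `#A(f) = #(ω-image of S)`. -/
theorem stmt_4 (f : ℝ → ℝ) (S : Set ℝ) (lam : ℝ)
    (hlam0 : 0 < lam) (hlam1 : lam < 1)
    (hSfin : S.Finite) (hS0 : (0:ℝ) ∈ S) (hSsub : S ⊆ Set.Ico 0 1)
    (hmap : Set.MapsTo f (Set.Ico 0 1) (Set.Ico 0 1))
    (hrc : ∀ x ∈ Set.Ico (0:ℝ) 1, ContinuousWithinAt f (Set.Ici x) x)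
    (hpiece : ∀ x ∈ Set.Ico (0:ℝ) 1, ∀ y ∈ Set.Ico (0:ℝ) 1, x < y →
      (∀ s ∈ S, s ∉ Set.Ioc x y) → f x < f y ∧ f y - f x ≤ lam * (y - x))
    (hper : ∃ x ∈ Set.Ico (0:ℝ) 1, ∃ p, 1 ≤ p ∧ f^[p] x = x) :
    (∃ ψ : ℝ → ℝ,
      (∀ x ∈ Set.Ico (0:ℝ) 1, (∃ p, 1 ≤ p ∧ f^[p] x = x) → ψ x ∈ S) ∧
      (∀ x ∈ Set.Ico (0:ℝ) 1, ∀ y ∈ Set.Ico (0:ℝ) 1,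
        (∃ p, 1 ≤ p ∧ f^[p] x = x) → (∃ p, 1 ≤ p ∧ f^[p] y = y) →
        (omegaSet f (ψ x) = omegaSet f (ψ y) ↔
          Set.range (fun m => f^[m] x) = Set.range (fun m => f^[m] y)))) ∧
    {O : Set ℝ | ∃ x, x ∈ Set.Ico (0:ℝ) 1 ∧ (∃ p, 1 ≤ p ∧ f^[p] x = x) ∧
        O = Set.range fun m => f^[m] x}.Finite ∧
    {O : Set ℝ | ∃ x, x ∈ Set.Ico (0:ℝ) 1 ∧ (∃ p, 1 ≤ p ∧ f^[p] x = x) ∧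
        O = Set.range fun m => f^[m] x}.ncard ≤ (omegaSet f '' S).ncard := by
  classical
  have key : ∀ x : ℝ, x ∈ Set.Ico (0:ℝ) 1 → (∃ p, 1 ≤ p ∧ f^[p] x = x) →
      ∃ s, s ∈ S ∧ omegaSet f s = Set.range fun m => f^[m] x := by
    intro x hx ⟨p, hp, hxp⟩
    obtain ⟨s, hs1, hs2⟩ := stmt4_key hlam0 hlam1 hSfin hS0 hSsub hmap hrc hpiece hx hp hxp
    exact ⟨s, hs1, hs2⟩
  choose! ψ hψS hψω using key
  have hsub : {O : Set ℝ | ∃ x, x ∈ Set.Ico (0:ℝ) 1 ∧ (∃ p, 1 ≤ p ∧ f^[p] x = x) ∧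
      O = Set.range fun m => f^[m] x} ⊆ omegaSet f '' S := by
    rintro O ⟨x, hx, hxper, rfl⟩
    exact ⟨ψ x, hψS x hx hxper, hψω x hx hxper⟩
  refine ⟨⟨ψ, hψS, ?_⟩, (hSfin.image _).subset hsub, Set.ncard_le_ncard hsub (hSfin.image _)⟩
  intro x hx y hy hxper hyper
  rw [hψω x hx hxper, hψω y hy hyper]
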